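/- Soundness of universal reduction: let Π.ψ be a PCNF, C ∪ {l} a non-tautological clause of ψ where l is universal in Π and every existential literal l' of C satisfies l' <_Π l (l' is quantified in an earlier block than l). Then Π.ψ is satisfiable if and only if Π.ψ' is satisfiable, where ψ' is ψ with the clause C ∪ {l} replaced by C. -/

import Mathlib

/-- Variables are natural numbers. -/
abbrev Var := ℕ

/-- A literal is a variable together with a polarity. -/
abbrev Lit := Var × Bool

/-- Negation of a literal. -/
def Lit.negate (l : Lit) : Lit := (l.1, !l.2)

/-- A clause is a finite set of literals (interpreted disjunctively). -/
abbrev Clause := Finset Lit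

/-- A cube is a finite set of literals (interpreted conjunctively). -/
abbrev Cube := Finset Lit

/-- A CNF is a finite set of clauses. -/
abbrev Cnf := Finset Clause

/-- An assignment is a finite set of literals. -/
abbrev Assignment := Finset Lit

/-- An assignment contains no complementary pair of literals. -/
def Assignment.consistent (A : Assignment) : Prop := ∀ l ∈ A, Lit.negate l ∉ A

/-- A total assignment satisfies a literal. -/
def litSat (σ : Var → Bool) (l : Lit) : Prop := σ l.1 = l.2

/-- A total assignment satisfies a clause. -/
def clauseSat (σ : Var → Bool) (C : Clause) : Prop := ∃ l ∈ C, litSat σ l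

/-- A total assignment satisfies a CNF (is a propositional model). -/
def cnfSat (σ : Var → Bool) (ψ : Cnf) : Prop := ∀ C ∈ ψ, clauseSat σ C

/-- A total assignment satisfies a cube. -/
def cubeSat (σ : Var → Bool) (D : Cube) : Prop := ∀ l ∈ D, litSat σ l

/-- Restriction of a clause by an assignment: delete falsified literals. -/
def Clause.restrict (C : Clause) (A : Assignment) : Clause :=
  C.filter (fun l => Lit.negate l ∉ A)

/-- Restriction ψ[A] of a CNF by an assignment: remove satisfied clauses and
delete falsified literals from the remaining clauses. -/
def Cnf.restrict (ψ : Cnf) (A : Assignment) : Cnf :=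
  (ψ.filter (fun C => ∀ l ∈ A, l ∉ C)).image (fun C => Clause.restrict C A)

/-- Quantifiers. -/
inductive Quant | ex | all
deriving DecidableEq

/-- A quantifier prefix: a list of quantified variables (outermost first). -/
abbrev QPrefix := List (Quant × Var)

/-- Restriction of a prefix by an assignment: remove assigned variables. -/
def QPrefix.restrict (pre : QPrefix) (A : Assignment) : QPrefix :=
  pre.filter (fun q => q.2 ∉ A.image Prod.fst)

/-- Satisfiability of the PCNF `pre.ψ`, defined recursively over the prefix:
an existential variable needs one satisfiable branch, a universal variable
both; a quantifier-free CNF is satisfiable iff it is propositionally true. -/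
def qbfSat : QPrefix → Cnf → Prop
  | [], ψ => ∃ σ : Var → Bool, cnfSat σ ψ
  | (Quant.ex, x) :: pre, ψ =>
      qbfSat pre (Cnf.restrict ψ {(x, true)}) ∨ qbfSat pre (Cnf.restrict ψ {(x, false)})
  | (Quant.all, x) :: pre, ψ =>
      qbfSat pre (Cnf.restrict ψ {(x, true)}) ∧ qbfSat pre (Cnf.restrict ψ {(x, false)})

/-- `x` is quantified before (outer to) `y` in the prefix. -/
def before (pre : QPrefix) (x y : Var) : Prop :=
  ∃ i j : Fin pre.length, (i : ℕ) < (j : ℕ) ∧ (pre.get i).2 = x ∧ (pre.get j).2 = y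


section Aux

lemma Lit.negate_negate (l : Lit) : Lit.negate (Lit.negate l) = l := by
  simp [Lit.negate]

lemma clause_restrict_eq_self {C : Clause} {A : Assignment}
    (h : ∀ m ∈ C, Lit.negate m ∉ A) : Clause.restrict C A = C :=
  Finset.filter_true_of_mem h

lemma cnf_restrict_insert_of_mem {D : Clause} {φ : Cnf} {A : Assignment}
    (a : Lit) (ha : a ∈ A) (haD : a ∈ D) :
    Cnf.restrict (insert D φ) A = Cnf.restrict φ A := by
  unfold Cnf.restrict
  rw [Finset.filter_insert, if_neg]
  intro h
  exact h a ha haD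

lemma cnf_restrict_insert_of_not_mem {D : Clause} {φ : Cnf} {A : Assignment}
    (h : ∀ a ∈ A, a ∉ D) :
    Cnf.restrict (insert D φ) A = insert (Clause.restrict D A) (Cnf.restrict φ A) := by
  unfold Cnf.restrict
  rw [Finset.filter_insert, if_pos h, Finset.image_insert]

lemma restrict_refine {Y Z : Cnf} (A : Assignment)
    (h : ∀ E ∈ Z, ∃ E' ∈ Y, E' ⊆ E) :
    ∀ E ∈ Cnf.restrict Z A, ∃ E' ∈ Cnf.restrict Y A, E' ⊆ E := by
  intro E hE
  unfold Cnf.restrict at hE ⊢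
  rcases Finset.mem_image.1 hE with ⟨E₀, hE₀, rfl⟩
  have h₀ := Finset.mem_filter.1 hE₀
  obtain ⟨E', hE', hsub⟩ := h E₀ h₀.1
  refine ⟨Clause.restrict E' A, Finset.mem_image_of_mem _
    (Finset.mem_filter.2 ⟨hE', ?_⟩), Finset.filter_subset_filter _ hsub⟩
  intro a ha haE'
  exact h₀.2 a ha (hsub haE')

lemma qbfSat_mono : ∀ (pre : QPrefix) (Y Z : Cnf),
    (∀ E ∈ Z, ∃ E' ∈ Y, E' ⊆ E) → qbfSat pre Y → qbfSat pre Z := by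
  intro pre
  induction pre with
  | nil =>
    rintro Y Z h ⟨σ, hσ⟩
    refine ⟨σ, fun E hE => ?_⟩
    obtain ⟨E', hE', hsub⟩ := h E hE
    obtain ⟨m, hm, hsat⟩ := hσ E' hE'
    exact ⟨m, hsub hm, hsat⟩
  | cons hd pre ih =>
    obtain ⟨q, x⟩ := hd
    intro Y Z h hY
    cases q <;> simp only [qbfSat] at hY ⊢
    · rcases hY with hY | hY
      · exact Or.inl (ih _ _ (restrict_refine _ h) hY)
      · exact Or.inr (ih _ _ (restrict_refine _ h) hY)
    · exact ⟨ih _ _ (restrict_refine _ h) hY.1, ih _ _ (restrict_refine _ h) hY.2⟩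

lemma qbfSat_insert_erase (pre : QPrefix) (c d : Clause) (X : Cnf) (hcd : c ⊆ d) :
    qbfSat pre (insert c ((insert d X).erase d)) ↔ qbfSat pre (insert c X) := by
  constructor
  · intro h
    refine qbfSat_mono pre _ _ ?_ h
    intro E hE
    rcases Finset.mem_insert.1 hE with rfl | hE
    · exact ⟨E, Finset.mem_insert_self _ _, subset_rfl⟩
    · by_cases hEd : E = d
      · exact ⟨c, Finset.mem_insert_self _ _, hEd ▸ hcd⟩
      · exact ⟨E, Finset.mem_insert_of_mem
          (Finset.mem_erase.2 ⟨hEd, Finset.mem_insert_of_mem hE⟩), subset_rfl⟩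
  · intro h
    refine qbfSat_mono pre _ _ ?_ h
    intro E hE
    rcases Finset.mem_insert.1 hE with rfl | hE
    · exact ⟨E, Finset.mem_insert_self _ _, subset_rfl⟩
    · have h2 := Finset.mem_erase.1 hE
      rcases Finset.mem_insert.1 h2.2 with h' | h'
      · exact absurd h' h2.1
      · exact ⟨E, Finset.mem_insert_of_mem h', subset_rfl⟩

lemma before_cons {q : Quant} {x : Var} {pre : QPrefix} {a b : Var}
    (ha : a ≠ x) (hb : b ≠ x) (h : before ((q, x) :: pre) a b) : before pre a b := by
  obtain ⟨⟨i, hi⟩, ⟨j, hj⟩, hij, hgi, hgj⟩ := h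
  simp only [List.length_cons] at hi hj
  simp only at hij
  cases i with
  | zero =>
    exact absurd hgi.symm ha
  | succ i' =>
    cases j with
    | zero => omega
    | succ j' =>
      refine ⟨⟨i', by omega⟩, ⟨j', by omega⟩, by simpa using hij, ?_, ?_⟩
      · simpa using hgi
      · simpa using hgj

lemma unsat_univ : ∀ (pre : QPrefix), (pre.map Prod.snd).Nodup →
    ∀ (C : Clause) (φ : Cnf), (∀ m ∈ C, (Quant.all, m.1) ∈ pre) →
    (∀ m ∈ C, Lit.negate m ∉ C) → ¬ qbfSat pre (insert C φ) := by
  intro pre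
  induction pre with
  | nil =>
    intro _ C φ hC _ h
    obtain ⟨σ, hσ⟩ := h
    obtain ⟨m, hm, _⟩ := hσ C (Finset.mem_insert_self _ _)
    exact absurd (hC m hm) List.not_mem_nil
  | cons hd pre ih =>
    obtain ⟨q, x⟩ := hd
    intro hnd C φ hC hnt h
    rw [List.map_cons, List.nodup_cons] at hnd
    obtain ⟨hxnot, hnd'⟩ := hnd
    by_cases hex : ∃ m ∈ C, m.1 = x
    · obtain ⟨m, hm, hmx⟩ := hex
      have hq : q = Quant.all := by
        have hmem := hC m hm
        rw [hmx] at hmem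
        rcases List.mem_cons.1 hmem with h' | h'
        · exact (congrArg Prod.fst h').symm
        · exact absurd (List.mem_map_of_mem (f := Prod.snd) h') hxnot
      subst hq
      simp only [qbfSat] at h
      have hbr : qbfSat pre (Cnf.restrict (insert C φ) {(x, !m.2)}) := by
        cases hm2 : m.2
        · simpa [hm2] using h.1
        · simpa [hm2] using h.2
      have hnotin : (x, !m.2) ∉ C := by
        intro hin
        have hne : Lit.negate m = (x, !m.2) := by rw [← hmx]; rfl
        exact hnt m hm (hne ▸ hin)
      rw [cnf_restrict_insert_of_not_mem
        (by intro a ha; rw [Finset.mem_singleton] at ha; subst ha; exact hnotin)] at hbr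
      have hC' : ∀ m' ∈ Clause.restrict C {(x, !m.2)}, (Quant.all, m'.1) ∈ pre := by
        intro m' hm'
        have hm'C : m' ∈ C := Finset.filter_subset _ _ hm'
        have hm'x : m'.1 ≠ x := by
          intro hx'
          have hneg : Lit.negate m' ∉ ({(x, !m.2)} : Finset Lit) :=
            (Finset.mem_filter.1 hm').2
          apply hneg
          rw [Finset.mem_singleton]
          have hm2eq : m'.2 = m.2 := by
            by_contra hne
            have heq : m' = Lit.negate m := by
              obtain ⟨a, b⟩ := m'
              obtain ⟨c, d⟩ := m
              simp only [Lit.negate]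
              simp only at hx' hmx hne
              subst hx'
              subst hmx
              cases b <;> cases d <;> simp_all
            exact hnt m hm (heq ▸ hm'C)
          obtain ⟨a, b⟩ := m'
          simp only [Lit.negate]
          simp only at hx' hm2eq
          rw [hx', hm2eq]
        rcases List.mem_cons.1 (hC m' hm'C) with h' | h'
        · exact absurd (congrArg Prod.snd h') hm'x
        · exact h'
      have hnt' : ∀ m' ∈ Clause.restrict C {(x, !m.2)},
          Lit.negate m' ∉ Clause.restrict C {(x, !m.2)} := by
        intro m' hm' hneg
        exact hnt m' (Finset.filter_subset _ _ hm') (Finset.filter_subset _ _ hneg)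
      exact ih hnd' _ _ hC' hnt' hbr
    · push_neg at hex
      have hrestr : ∀ b : Bool, Cnf.restrict (insert C φ) {(x, b)}
          = insert C (Cnf.restrict φ {(x, b)}) := by
        intro b
        rw [cnf_restrict_insert_of_not_mem
          (by intro a ha hain; rw [Finset.mem_singleton] at ha; subst ha; exact hex _ hain rfl),
          clause_restrict_eq_self
          (by intro m hm hmem; rw [Finset.mem_singleton] at hmem
              exact hex m hm (congrArg Prod.fst hmem))]
      have hC' : ∀ m ∈ C, (Quant.all, m.1) ∈ pre := by
        intro m hm
        rcases List.mem_cons.1 (hC m hm) with h' | h'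
        · exact absurd (congrArg Prod.snd h') (hex m hm)
        · exact h'
      cases q
      · simp only [qbfSat] at h
        rcases h with h | h <;> rw [hrestr] at h <;> exact ih hnd' _ _ hC' hnt h
      · simp only [qbfSat] at h
        have h1 := h.1
        rw [hrestr] at h1
        exact ih hnd' _ _ hC' hnt h1

lemma ur_main (l : Lit) :
    ∀ (pre : QPrefix) (ψ : Cnf) (C : Clause),
      (pre.map Prod.snd).Nodup →
      insert l C ∈ ψ →
      l ∉ C →
      (∀ m ∈ insert l C, Lit.negate m ∉ insert l C) →
      (Quant.all, l.1) ∈ pre →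
      (∀ m ∈ C, ∃ q, (q, m.1) ∈ pre) →
      (∀ m ∈ C, (Quant.ex, m.1) ∈ pre → before pre m.1 l.1) →
      (qbfSat pre ψ ↔ qbfSat pre (insert C (ψ.erase (insert l C)))) := by
  intro pre
  induction pre with
  | nil =>
    intro ψ C _ _ _ _ huniv _ _
    exact absurd huniv List.not_mem_nil
  | cons hd pre ih =>
    obtain ⟨q, x⟩ := hd
    intro ψ C hnd hmem hl hnt huniv hvars horder
    rw [List.map_cons, List.nodup_cons] at hnd
    obtain ⟨hxnot, hnd'⟩ := hnd
    set φ := ψ.erase (insert l C) with hφ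
    have hψeq : ψ = insert (insert l C) φ := (Finset.insert_erase hmem).symm
    have hneglC : Lit.negate l ∉ insert l C := hnt l (Finset.mem_insert_self _ _)
    have hCvar : ∀ m ∈ C, m.1 ≠ l.1 := by
      intro m hm hlm
      have hml : m = l ∨ m = Lit.negate l := by
        by_cases h2 : m.2 = l.2
        · exact Or.inl (Prod.ext hlm h2)
        · refine Or.inr (Prod.ext hlm ?_)
          exact Bool.eq_not_iff.2 h2
      rcases hml with rfl | rfl
      · exact hl hm
      · exact hneglC (Finset.mem_insert_of_mem hm)
    have hntC : ∀ m ∈ C, Lit.negate m ∉ C := by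
      intro m hm hneg
      exact hnt m (Finset.mem_insert_of_mem hm) (Finset.mem_insert_of_mem hneg)
    by_cases hx : x = l.1
    · -- the head quantifier is l's variable, necessarily universal
      subst hx
      have hq : q = Quant.all := by
        rcases List.mem_cons.1 huniv with h' | h'
        · exact (congrArg Prod.fst h').symm
        · exact absurd (List.mem_map_of_mem (f := Prod.snd) h') hxnot
      subst hq
      -- every remaining variable of C is universal in the tail
      have hCall : ∀ m ∈ C, (Quant.all, m.1) ∈ pre := by
        intro m hm
        obtain ⟨q', hq'⟩ := hvars m hm
        rcases List.mem_cons.1 hq' with h' | h'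
        · exact absurd (congrArg Prod.snd h') (hCvar m hm)
        · cases q' with
          | ex =>
            obtain ⟨⟨i, hi⟩, ⟨j, hj⟩, hij, hgi, hgj⟩ :=
              horder m hm (List.mem_cons_of_mem _ h')
            simp only at hij
            cases j with
            | zero => omega
            | succ j' =>
              exfalso
              apply hxnot
              have hjmem : ((Quant.all, l.1) :: pre).get ⟨j' + 1, hj⟩ ∈ pre := by
                simpa using List.get_mem pre ⟨j', by
                  simp only [List.length_cons] at hj; omega⟩
              have hm9 := List.mem_map_of_mem (f := Prod.snd) hjmem
              rw [hgj] at hm9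
              exact hm9
          | all => exact h'
      -- restriction computations
      have hkeyφ' : ∀ b : Bool, Cnf.restrict (insert C φ) {(l.1, b)}
          = insert C (Cnf.restrict φ {(l.1, b)}) := by
        intro b
        rw [cnf_restrict_insert_of_not_mem
          (by intro a ha hain; rw [Finset.mem_singleton] at ha; subst ha
              exact hCvar _ hain rfl),
          clause_restrict_eq_self
          (by intro m hm hmem; rw [Finset.mem_singleton] at hmem
              have h5 := congrArg Prod.fst hmem
              exact hCvar m hm h5)]
      have hkeyψ : ∀ b : Bool, b ≠ l.2 → Cnf.restrict ψ {(l.1, b)}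
          = insert C (Cnf.restrict φ {(l.1, b)}) := by
        intro b hb
        have hbl : (l.1, b) = Lit.negate l := by
          refine Prod.ext rfl ?_
          exact Bool.eq_not_iff.2 hb
        rw [hψeq, cnf_restrict_insert_of_not_mem
          (by intro a ha hain; rw [Finset.mem_singleton] at ha; subst ha
              rw [hbl] at hain; exact hneglC hain)]
        congr 1
        unfold Clause.restrict
        rw [Finset.filter_insert, if_neg (not_not_intro (Finset.mem_singleton.2 hbl.symm))]
        exact Finset.filter_true_of_mem (by
          intro m hm hmem
          rw [Finset.mem_singleton] at hmem
          have h5 := congrArg Prod.fst hmem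
          exact hCvar m hm h5)
      have hC_unsat : ∀ b : Bool, ¬ qbfSat pre (insert C (Cnf.restrict φ {(l.1, b)})) :=
        fun b => unsat_univ pre hnd' C _ hCall hntC
      simp only [qbfSat]
      constructor
      · rintro ⟨h1, h2⟩
        exfalso
        cases hb : l.2
        · rw [hkeyψ true (by simp [hb])] at h1
          exact hC_unsat _ h1
        · rw [hkeyψ false (by simp [hb])] at h2
          exact hC_unsat _ h2
      · rintro ⟨h1, h2⟩
        exfalso
        cases hb : l.2
        · rw [hkeyφ' true] at h1
          exact hC_unsat _ h1
        · rw [hkeyφ' false] at h2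
          exact hC_unsat _ h2
    · -- head variable differs from l's variable
      have huniv' : (Quant.all, l.1) ∈ pre := by
        rcases List.mem_cons.1 huniv with h' | h'
        · exact absurd (congrArg Prod.snd h').symm hx
        · exact h'
      have hbranch : ∀ b : Bool,
          qbfSat pre (Cnf.restrict ψ {(x, b)}) ↔
          qbfSat pre (Cnf.restrict (insert C φ) {(x, b)}) := by
        intro b
        by_cases hmemb : (x, b) ∈ C
        · rw [hψeq,
            cnf_restrict_insert_of_mem (x, b) (Finset.mem_singleton_self _)
              (Finset.mem_insert_of_mem hmemb),
            cnf_restrict_insert_of_mem (x, b) (Finset.mem_singleton_self _) hmemb]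
        · have hmembD : (x, b) ∉ insert l C := by
            intro h'
            rcases Finset.mem_insert.1 h' with h' | h'
            · exact hx (congrArg Prod.fst h')
            · exact hmemb h'
          set C₁ := Clause.restrict C {(x, b)} with hC₁
          have hC₁sub : C₁ ⊆ C := Finset.filter_subset _ _
          have hD₁ : Clause.restrict (insert l C) {(x, b)} = insert l C₁ := by
            unfold Clause.restrict
            rw [Finset.filter_insert, if_pos (by
              rw [Finset.mem_singleton]
              intro h'
              exact hx (congrArg Prod.fst h'.symm))]
            rfl
          have hrψ : Cnf.restrict ψ {(x, b)}
              = insert (insert l C₁) (Cnf.restrict φ {(x, b)}) := by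
            rw [hψeq, cnf_restrict_insert_of_not_mem
              (by intro a ha; rw [Finset.mem_singleton] at ha; subst ha; exact hmembD),
              hD₁]
          have hrψ' : Cnf.restrict (insert C φ) {(x, b)}
              = insert C₁ (Cnf.restrict φ {(x, b)}) := by
            rw [cnf_restrict_insert_of_not_mem
              (by intro a ha; rw [Finset.mem_singleton] at ha; subst ha; exact hmemb)]
          have hvarsx : ∀ m ∈ C₁, m.1 ≠ x := by
            intro m hm hmx
            have hneg : Lit.negate m ∉ ({(x, b)} : Finset Lit) :=
              (Finset.mem_filter.1 hm).2
            by_cases h2 : m.2 = b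
            · exact hmemb ((Prod.ext hmx h2 : m = (x, b)) ▸ hC₁sub hm)
            · apply hneg
              rw [Finset.mem_singleton]
              have h3 : (!m.2) = b := (Bool.eq_not_iff.2 (fun h4 => h2 h4.symm)).symm
              exact Prod.ext hmx h3
          have hsubD : insert l C₁ ⊆ insert l C := Finset.insert_subset_insert _ hC₁sub
          have hnt₁ : ∀ m ∈ insert l C₁, Lit.negate m ∉ insert l C₁ := by
            intro m hm hneg
            exact hnt m (hsubD hm) (hsubD hneg)
          have hvars₁ : ∀ m ∈ C₁, ∃ q', (q', m.1) ∈ pre := by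
            intro m hm
            obtain ⟨q', hq'⟩ := hvars m (hC₁sub hm)
            rcases List.mem_cons.1 hq' with h' | h'
            · exact absurd (congrArg Prod.snd h') (hvarsx m hm)
            · exact ⟨q', h'⟩
          have horder₁ : ∀ m ∈ C₁, (Quant.ex, m.1) ∈ pre → before pre m.1 l.1 := by
            intro m hm hex
            exact before_cons (hvarsx m hm) (fun h' => hx h'.symm)
              (horder m (hC₁sub hm) (List.mem_cons_of_mem _ hex))
          rw [hrψ, hrψ',
            ih (insert (insert l C₁) (Cnf.restrict φ {(x, b)})) C₁ hnd'
              (Finset.mem_insert_self _ _) (fun hlc => hl (hC₁sub hlc))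
              hnt₁ huniv' hvars₁ horder₁]
          exact qbfSat_insert_erase pre C₁ (insert l C₁) _ (Finset.subset_insert _ _)
      cases q
      · simp only [qbfSat]
        exact or_congr (hbranch true) (hbranch false)
      · simp only [qbfSat]
        exact and_congr (hbranch true) (hbranch false)

end Aux

/-- Soundness of universal reduction: a universal literal `l` of a
non-tautological clause `C ∪ {l}` that is quantified after all existential
literals of `C` may be deleted, preserving QBF satisfiability. -/
theorem universal_reduction_sound
    (pre : QPrefix) (ψ : Cnf) (C : Clause) (l : Lit)
    (hnodup : (pre.map Prod.snd).Nodup)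
    (hmem : insert l C ∈ ψ)
    (hl : l ∉ C)
    (hnontaut : ∀ m ∈ insert l C, Lit.negate m ∉ insert l C)
    (huniv : (Quant.all, l.1) ∈ pre)
    (hvars : ∀ m ∈ C, ∃ q, (q, m.1) ∈ pre)
    (horder : ∀ m ∈ C, (Quant.ex, m.1) ∈ pre → before pre m.1 l.1) :
    qbfSat pre ψ ↔ qbfSat pre (insert C (ψ.erase (insert l C))) := by
  exact ur_main l pre ψ C hnodup hmem hl hnontaut huniv hvars horder
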